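/- In an amalgamated free product G *_C H, if n ≥ 2 and (w_1, ..., w_n) and (v_1, ..., v_n) are cyclically reduced sequences whose products are conjugate in G *_C H, then there exists k ∈ {0, 1, ..., n-1} and elements c_1, ..., c_n of C such that w_i = c_{i+k-1}^{-1} v_{i+k} c_{i+k} for all i (indices mod n). In particular, w_i and v_{i+k} lie in the same factor (both in G or both in H). -/

import Mathlib

set_option linter.unusedSectionVars false
set_option maxHeartbeats 1000000


/-!
Abstract model of an amalgamated free product `G *_C H`:
a group `K` with subgroups `G`, `H` and `C = G ⊓ H`, generated by `G ⊔ H`,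
in which the normal form theorem (the product of a nonempty reduced
sequence is not the identity) holds.
-/

namespace AmalgamStmt

variable {K : Type*} [Group K]

/-- The product `w 0 * w 1 * ⋯ * w (n-1)` of a finite sequence. -/
def seqProd {n : ℕ} (w : Fin n → K) : K := (List.ofFn w).prod

/-- A finite sequence is *reduced* (w.r.t. the factors `G` and `H`) if every term lies
in `G` or `H`, consecutive terms do not lie in a common factor, and a sequence of
length one does not consist of the identity. -/
def Reduced (G H : Subgroup K) {n : ℕ} (w : Fin n → K) : Prop :=
  (∀ i, w i ∈ G ∨ w i ∈ H) ∧
  (∀ i : ℕ, ∀ h : i + 1 < n,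
    ¬(w ⟨i, by omega⟩ ∈ G ∧ w ⟨i + 1, h⟩ ∈ G) ∧
    ¬(w ⟨i, by omega⟩ ∈ H ∧ w ⟨i + 1, h⟩ ∈ H)) ∧
  (n = 1 → ∀ i, w i ≠ 1)

/-- A sequence is *cyclically reduced* if all of its cyclic permutations are reduced. -/
def CyclicallyReduced (G H : Subgroup K) {n : ℕ} (w : Fin n → K) : Prop :=
  ∀ k : ℕ, Reduced G H (fun i : Fin n => w ⟨((i : ℕ) + k) % n, Nat.mod_lt _ i.pos⟩)

/-- Britton's normal form property: the product of a nonempty reduced sequence is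
not the identity. -/
def NormalFormProperty (G H : Subgroup K) : Prop :=
  ∀ (n : ℕ) (w : Fin n → K), 0 < n → Reduced G H w → seqProd w ≠ 1

/-- The double coset `C x C`. -/
def doubleCoset (C : Subgroup K) (x : K) : Set K :=
  {y | ∃ c₁ ∈ C, ∃ c₂ ∈ C, y = c₁ * x * c₂}

/-- `C` is malnormal in `G`: for `g ∈ G \ C`, `g⁻¹ C g ∩ C = {1}`. -/
def MalnormalIn (C G : Subgroup K) : Prop :=
  ∀ g ∈ G, g ∉ C → ∀ x ∈ C, g⁻¹ * x * g ∈ C → x = 1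

/-- The product `w 1 ⋯ w i * a * w (i+1) ⋯ w n` obtained by inserting `a`
after the first `i` terms of the sequence `w`. -/
def insProd {n : ℕ} (w : Fin n → K) (i : ℕ) (a : K) : K :=
  ((List.ofFn w).take i).prod * a * ((List.ofFn w).drop i).prod

lemma chain'_append_iff {α : Type*} {R : α → α → Prop} {l₁ l₂ : List α} :
    (l₁ ++ l₂).Chain' R ↔ l₁.Chain' R ∧ l₂.Chain' R ∧
      ∀ x ∈ l₁.getLast?, ∀ y ∈ l₂.head?, R x y := List.isChain_append

lemma chain'_cons'_iff {α : Type*} {R : α → α → Prop} {x : α} {l : List α} :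
    (x :: l).Chain' R ↔ (∀ y ∈ l.head?, R x y) ∧ l.Chain' R := List.isChain_cons

lemma chain'_cons_iff {α : Type*} {R : α → α → Prop} {a b : α} {l : List α} :
    (a :: b :: l).Chain' R ↔ R a b ∧ (b :: l).Chain' R := List.isChain_cons_cons

lemma chain'_map_iff {α β : Type*} {R : α → α → Prop} (f : β → α) {l : List β} :
    (l.map f).Chain' R ↔ l.Chain' (fun a b : β => R (f a) (f b)) := List.isChain_map f

lemma chain'_reverse_iff {α : Type*} {R : α → α → Prop} {l : List α} :
    l.reverse.Chain' R ↔ l.Chain' (fun a b => R b a) := List.isChain_reverse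

lemma chain'_iff_getElem' {α : Type*} {R : α → α → Prop} {l : List α} :
    l.Chain' R ↔ ∀ (i : Nat) (_hi : i + 1 < l.length), R l[i] l[i + 1] :=
  List.isChain_iff_getElem

section SRinfra

variable (G H : Subgroup K)

/-- `a` and `b` share no factor. -/
def NoF (a b : K) : Prop := ¬(a ∈ G ∧ b ∈ G) ∧ ¬(a ∈ H ∧ b ∈ H)

/-- Strictly reduced list: each term lies in a factor but not in the core,
consecutive terms share no factor. -/
def SR (l : List K) : Prop :=
  (∀ x ∈ l, (x ∈ G ∨ x ∈ H) ∧ x ∉ G ⊓ H) ∧ l.Chain' (NoF G H)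

variable {G H}

lemma nof_symm {a b : K} (h : NoF G H a b) : NoF G H b a :=
  ⟨fun ⟨x, y⟩ => h.1 ⟨y, x⟩, fun ⟨x, y⟩ => h.2 ⟨y, x⟩⟩

lemma nof_inv_inv {a b : K} (h : NoF G H a b) : NoF G H b⁻¹ a⁻¹ := by
  simpa only [NoF, inv_mem_iff, and_comm] using h

lemma britton_SR (hB : NormalFormProperty G H) {l : List K} (hl : SR G H l)
    (hne : l ≠ []) : l.prod ≠ 1 := by
  have hlen : 0 < l.length := List.length_pos_iff.2 hne
  have hred : Reduced G H l.get := by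
    refine ⟨fun i => (hl.1 _ (List.get_mem l i)).1, ?_, ?_⟩
    · intro i h
      exact List.isChain_iff_getElem.1 hl.2 i h
    · intro h1 i hone
      exact (hl.1 _ (List.get_mem l i)).2 (by rw [show l.get i = 1 from hone]; exact ⟨one_mem _, one_mem _⟩)
  have := hB l.length l.get hlen hred
  rwa [seqProd, List.ofFn_get] at this

lemma sr_mergeLast {l : List K} {y d : K} (h : SR G H (l ++ [y])) (hd : d ∈ G ⊓ H) :
    SR G H (l ++ [y * d]) := by
  obtain ⟨hmem, hch⟩ := h
  have hdG : d ∈ G := hd.1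
  have hdH : d ∈ H := hd.2
  have hy := hmem y (by simp)
  constructor
  · intro x hx
    rcases List.mem_append.1 hx with hx | hx
    · exact hmem x (by simp [hx])
    · simp only [List.mem_singleton] at hx
      subst hx
      refine ⟨?_, ?_⟩
      · rcases hy.1 with h' | h'
        · exact Or.inl (mul_mem h' hdG)
        · exact Or.inr (mul_mem h' hdH)
      · intro hyd
        exact hy.2 ⟨(mul_mem_cancel_right hdG).1 hyd.1, (mul_mem_cancel_right hdH).1 hyd.2⟩
  · rw [chain'_append_iff] at hch ⊢
    refine ⟨hch.1, List.IsChain.singleton _, ?_⟩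
    intro x hx y' hy'
    simp only [List.head?_cons, Option.mem_some_iff] at hy'
    subst hy'
    have := hch.2.2 x hx y (by simp)
    exact ⟨fun ⟨h1, h2⟩ => this.1 ⟨h1, (mul_mem_cancel_right hdG).1 h2⟩,
      fun ⟨h1, h2⟩ => this.2 ⟨h1, (mul_mem_cancel_right hdH).1 h2⟩⟩

lemma sr_mergeHead {t : List K} {y d : K} (h : SR G H (y :: t)) (hd : d ∈ G ⊓ H) :
    SR G H ((d * y) :: t) := by
  obtain ⟨hmem, hch⟩ := h
  have hdG : d ∈ G := hd.1
  have hdH : d ∈ H := hd.2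
  have hy := hmem y (by simp)
  constructor
  · intro x hx
    rcases List.mem_cons.1 hx with hx | hx
    · subst hx
      refine ⟨?_, ?_⟩
      · rcases hy.1 with h' | h'
        · exact Or.inl (mul_mem hdG h')
        · exact Or.inr (mul_mem hdH h')
      · intro hyd
        exact hy.2 ⟨(mul_mem_cancel_left hdG).1 hyd.1, (mul_mem_cancel_left hdH).1 hyd.2⟩
    · exact hmem x (by simp [hx])
  · rw [chain'_cons'_iff] at hch ⊢
    refine ⟨?_, hch.2⟩
    intro z hz
    have := hch.1 z hz
    exact ⟨fun ⟨h1, h2⟩ => this.1 ⟨(mul_mem_cancel_left hdG).1 h1, h2⟩,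
      fun ⟨h1, h2⟩ => this.2 ⟨(mul_mem_cancel_left hdH).1 h1, h2⟩⟩

lemma sr_prod_notC (hB : NormalFormProperty G H) {l : List K} (hl : SR G H l)
    (hne : l ≠ []) : l.prod ∉ G ⊓ H := by
  intro hmem
  obtain ⟨l₀, y, rfl⟩ := (l.eq_nil_or_concat).resolve_left hne
  rw [List.concat_eq_append] at hl hmem hne
  have h2 := sr_mergeLast hl (inv_mem hmem)
  have := britton_SR hB h2 (by simp)
  apply this
  have : (l₀ ++ [y * (l₀ ++ [y]).prod⁻¹]).prod
      = (l₀ ++ [y]).prod * (l₀ ++ [y]).prod⁻¹ := by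
    simp [List.prod_append, mul_assoc]
  rw [this, mul_inv_cancel]

/-- inverse-reverse of a list -/
def invrev (l : List K) : List K := l.reverse.map (·⁻¹)

@[simp] lemma invrev_nil : invrev ([] : List K) = [] := rfl

lemma invrev_prod (l : List K) : (invrev l).prod = l.prod⁻¹ := by
  rw [List.prod_inv_reverse, invrev, List.map_reverse]

lemma invrev_concat (l : List K) (y : K) : invrev (l ++ [y]) = y⁻¹ :: invrev l := by
  simp [invrev]

lemma invrev_head? (l : List K) : (invrev l).head? = l.getLast?.map (·⁻¹) := by
  rw [invrev, List.head?_map, List.head?_reverse]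

lemma sr_invrev {l : List K} (h : SR G H l) : SR G H (invrev l) := by
  obtain ⟨hmem, hch⟩ := h
  constructor
  · intro x hx
    rw [invrev, List.mem_map] at hx
    obtain ⟨y, hy, rfl⟩ := hx
    rw [List.mem_reverse] at hy
    have := hmem y hy
    simpa only [inv_mem_iff] using this
  · rw [invrev, chain'_map_iff, chain'_reverse_iff]
    refine List.IsChain.imp ?_ hch
    intro a b hab
    exact nof_inv_inv hab


/-- Uniqueness of strictly reduced forms, up to interleaving coset elements. -/
lemma sr_unique (hB : NormalFormProperty G H) :
    ∀ a b : List K, SR G H a → SR G H b → ∀ d ∈ G ⊓ H, a.prod = b.prod * d →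
      a.length = b.length ∧ ∃ c : ℕ → K, c 0 = 1 ∧ c a.length = d ∧
        (∀ i, c i ∈ G ⊓ H) ∧
        ∀ i, i < a.length →
          a.getD i 1 = (c i)⁻¹ * b.getD i 1 * c (i + 1) ∧
          ((a.getD i 1 ∈ G ∧ b.getD i 1 ∈ G) ∨ (a.getD i 1 ∈ H ∧ b.getD i 1 ∈ H)) := by
  intro a
  induction a using List.reverseRecOn with
  | nil =>
    intro b ha hb d hd hp
    rcases b.eq_nil_or_concat with rfl | ⟨b₀, y, rfl⟩
    · simp only [List.prod_nil, one_mul] at hp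
      exact ⟨rfl, fun _ => 1, rfl, hp, fun _ => one_mem _, fun i hi => absurd hi (by simp)⟩
    · exfalso
      rw [List.concat_eq_append] at hb hp
      simp only [List.prod_nil] at hp
      have : (b₀ ++ [y]).prod = d⁻¹ := by
        rw [← mul_eq_one_iff_eq_inv, ← hp]
      exact sr_prod_notC hB hb (by simp) (this ▸ inv_mem hd)
  | append_singleton a₀ x ih =>
    intro b ha hb d hd hp
    rcases b.eq_nil_or_concat with rfl | ⟨b₀, y, rfl⟩
    · exfalso
      simp only [List.prod_nil, one_mul] at hp
      exact sr_prod_notC hB ha (by simp) (hp ▸ hd)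
    rw [List.concat_eq_append] at hb hp ⊢
    -- merge d into the last entry of b
    have hb' : SR G H (b₀ ++ [y * d]) := sr_mergeLast hb hd
    have hp' : (a₀ ++ [x]).prod = (b₀ ++ [y * d]).prod := by
      rw [hp]; simp [List.prod_append, mul_assoc]
    set y' := y * d with hy'
    -- facts about terms
    have hx := ha.1 x (by simp)
    have hy'm := hb'.1 y' (by simp)
    -- key: x and y' share a factor
    have hkey : (x ∈ G ∧ y' ∈ G) ∨ (x ∈ H ∧ y' ∈ H) := by
      by_contra hk
      push_neg at hk
      have hX : SR G H ((a₀ ++ [x]) ++ invrev (b₀ ++ [y'])) := by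
        refine ⟨?_, ?_⟩
        · intro z hz
          rcases List.mem_append.1 hz with hz | hz
          · exact ha.1 z hz
          · exact (sr_invrev hb').1 z hz
        · rw [chain'_append_iff]
          refine ⟨ha.2, (sr_invrev hb').2, ?_⟩
          intro p hp1 q hq1
          rw [List.getLast?_concat] at hp1
          rw [invrev_concat] at hq1
          simp only [Option.mem_some_iff, List.head?_cons] at hp1 hq1
          subst hp1; subst hq1
          constructor
          · rintro ⟨h1, h2⟩
            exact hk.1 h1 (by rwa [inv_mem_iff] at h2)
          · rintro ⟨h1, h2⟩
            exact hk.2 h1 (by rwa [inv_mem_iff] at h2)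
      have hXne : (a₀ ++ [x]) ++ invrev (b₀ ++ [y']) ≠ [] := by simp
      refine britton_SR hB hX hXne ?_
      rw [List.prod_append, invrev_prod, hp', mul_inv_cancel]
    -- the correction term e = y' * x⁻¹ lies in the core
    set e : K := y' * x⁻¹ with he
    have heC : e ∈ G ⊓ H := by
      by_contra heC
      have heF : e ∈ G ∨ e ∈ H := by
        rcases hkey with ⟨h1, h2⟩ | ⟨h1, h2⟩
        · exact Or.inl (mul_mem h2 (inv_mem h1))
        · exact Or.inr (mul_mem h2 (inv_mem h1))
      have hX : SR G H (a₀ ++ ([e⁻¹] ++ invrev b₀)) := by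
        have ha₀ : SR G H a₀ := by
          have := ha.2
          rw [chain'_append_iff] at this
          exact ⟨fun z hz => ha.1 z (by simp [hz]), this.1⟩
        have hb₀ : SR G H b₀ := by
          have := hb'.2
          rw [chain'_append_iff] at this
          exact ⟨fun z hz => hb'.1 z (by simp [hz]), this.1⟩
        refine ⟨?_, ?_⟩
        · intro z hz
          rcases List.mem_append.1 hz with hz | hz
          · exact ha₀.1 z hz
          rcases List.mem_append.1 hz with hz | hz
          · simp only [List.mem_singleton] at hz
            subst hz
            exact ⟨by simpa only [inv_mem_iff] using heF, by simpa only [inv_mem_iff] using heC⟩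
          · exact (sr_invrev hb₀).1 z hz
        · rw [chain'_append_iff]
          refine ⟨ha₀.2, ?_, ?_⟩
          · rw [chain'_append_iff]
            refine ⟨List.IsChain.singleton _, (sr_invrev hb₀).2, ?_⟩
            intro p hp1 q hq1
            simp only [List.getLast?_singleton, Option.mem_some_iff] at hp1
            subst hp1
            rw [invrev_head?] at hq1
            obtain ⟨q₀, hq₀, rfl⟩ := Option.map_eq_some_iff.1 hq1
            -- q₀ is last of b₀; NoF q₀ y' from hb'
            have hnof : NoF G H q₀ y' := by
              have := hb'.2
              rw [chain'_append_iff] at this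
              exact this.2.2 q₀ hq₀ y' (by simp)
            constructor
            · rintro ⟨h1, h2⟩
              rw [inv_mem_iff] at h1 h2
              rcases hkey with ⟨hxg, hyg⟩ | ⟨hxh, hyh⟩
              · exact hnof.1 ⟨h2, hyg⟩
              · -- e ∈ G, e ∉ C so e ∉ H; but is that right? e ∈ G from h1
                -- hkey case H : x,y' ∈ H, and e ∈ G (h1): then e ∈ H too since e = y'*x⁻¹ ∈ H
                exact heC (Subgroup.mem_inf.2 ⟨h1, mul_mem hyh (inv_mem hxh)⟩)
            · rintro ⟨h1, h2⟩
              rw [inv_mem_iff] at h1 h2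
              rcases hkey with ⟨hxg, hyg⟩ | ⟨hxh, hyh⟩
              · exact heC (Subgroup.mem_inf.2 ⟨mul_mem hyg (inv_mem hxg), h1⟩)
              · exact hnof.2 ⟨h2, hyh⟩
          · intro p hp1 q hq1
            simp only [List.singleton_append, List.head?_cons, Option.mem_some_iff] at hq1
            subst hq1
            -- p is last of a₀, NoF p x from ha
            have hnof : NoF G H p x := by
              have := ha.2
              rw [chain'_append_iff] at this
              exact this.2.2 p hp1 x (by simp)
            constructor
            · rintro ⟨h1, h2⟩
              rw [inv_mem_iff] at h2
              rcases hkey with ⟨hxg, hyg⟩ | ⟨hxh, hyh⟩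
              · exact hnof.1 ⟨h1, hxg⟩
              · exact heC (Subgroup.mem_inf.2 ⟨h2, mul_mem hyh (inv_mem hxh)⟩)
            · rintro ⟨h1, h2⟩
              rw [inv_mem_iff] at h2
              rcases hkey with ⟨hxg, hyg⟩ | ⟨hxh, hyh⟩
              · exact heC (Subgroup.mem_inf.2 ⟨mul_mem hyg (inv_mem hxg), h2⟩)
              · exact hnof.2 ⟨h1, hxh⟩
      refine britton_SR hB hX (by simp) ?_
      have : (a₀ ++ ([e⁻¹] ++ invrev b₀)).prod = a₀.prod * (x * y'⁻¹) * b₀.prod⁻¹ := by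
        rw [List.prod_append, List.prod_append, invrev_prod]
        simp [he, mul_assoc]
      rw [this]
      have : a₀.prod * x = b₀.prod * y' := by
        have := hp'
        simp only [List.prod_append, List.prod_cons, List.prod_nil, mul_one] at this
        exact this
      rw [show a₀.prod * (x * y'⁻¹) * b₀.prod⁻¹
          = (a₀.prod * x) * (b₀.prod * y')⁻¹ by group, this, mul_inv_cancel]
    -- recurse
    have ha₀ : SR G H a₀ := by
      have := ha.2; rw [chain'_append_iff] at this
      exact ⟨fun z hz => ha.1 z (by simp [hz]), this.1⟩
    have hb₀ : SR G H b₀ := by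
      have := hb'.2; rw [chain'_append_iff] at this
      exact ⟨fun z hz => hb'.1 z (by simp [hz]), this.1⟩
    have hrec : a₀.prod = b₀.prod * e := by
      have h1 : a₀.prod * x = b₀.prod * y' := by
        have := hp'
        simp only [List.prod_append, List.prod_cons, List.prod_nil, mul_one] at this
        exact this
      rw [he, ← mul_assoc, ← h1]; group
    obtain ⟨hlen, c, hc0, hcL, hcmem, hrel⟩ := ih b₀ ha₀ hb₀ e heC hrec
    refine ⟨by simp only [List.length_append, List.length_singleton]; omega,
      fun i => if i ≤ a₀.length then c i else d, by beta_reduce; rw [if_pos (by omega)]; exact hc0, ?_, ?_, ?_⟩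
    · beta_reduce
      simp only [List.length_append, List.length_singleton]
      rw [if_neg (by omega)]
    · intro i
      beta_reduce
      by_cases h : i ≤ a₀.length
      · rw [if_pos h]; exact hcmem i
      · rw [if_neg h]; exact hd
    · intro i hi
      beta_reduce
      simp only [List.length_append, List.length_singleton] at hi
      by_cases h : i < a₀.length
      · rw [List.getD_append _ _ _ _ (by omega), List.getD_append _ _ _ _ (by omega),
          if_pos (by omega), if_pos (by omega)]
        exact hrel i h
      · have hiL : i = a₀.length := by omega
        subst hiL
        rw [if_pos (le_refl _), if_neg (by omega)]
        rw [List.getD_append_right _ _ _ _ (by omega), List.getD_append_right _ _ _ _ (by omega),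
          Nat.sub_self, ← hlen, Nat.sub_self]
        simp only [List.getD_cons_zero]
        constructor
        · rw [hcL, he, hy']
          group
        · rcases hkey with ⟨h1, h2⟩ | ⟨h1, h2⟩
          · exact Or.inl ⟨h1, by
              have : y = y' * d⁻¹ := by rw [hy']; group
              rw [this]; exact mul_mem h2 (inv_mem hd.1)⟩
          · exact Or.inr ⟨h1, by
              have : y = y' * d⁻¹ := by rw [hy']; group
              rw [this]; exact mul_mem h2 (inv_mem hd.2)⟩

section Win
variable {n : ℕ} (v : Fin n → K) (hn : 0 < n)

/-- `v` evaluated at `j mod n`. -/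
def vv (j : ℕ) : K := v ⟨j % n, Nat.mod_lt _ hn⟩

/-- The window `[v (a), v (a+1), ..., v (a+len-1)]` (indices mod `n`). -/
def win (a len : ℕ) : List K := List.ofFn fun i : Fin len => vv v hn (a + (i : ℕ))

lemma vv_add_n (j : ℕ) : vv v hn (j + n) = vv v hn j := by
  unfold vv; congr 1; exact Fin.ext (Nat.add_mod_right j n)

lemma win_length (a len : ℕ) : (win v hn a len).length = len := by
  simp [win]

lemma win_getD (a len i : ℕ) (h : i < len) :
    (win v hn a len).getD i 1 = vv v hn (a + i) := by
  rw [List.getD_eq_getElem _ _ (by simpa [win_length] using h)]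
  simp [win]

lemma win_succ_left (a len : ℕ) :
    win v hn a (len + 1) = vv v hn a :: win v hn (a + 1) len := by
  apply List.ext_getElem
  · simp [win_length]
  intro i h1 h2
  rcases i with _ | j
  · simp only [win, List.getElem_ofFn, List.getElem_cons_zero]
    congr 1
  · simp only [win, List.getElem_ofFn, List.getElem_cons_succ]
    congr 1
    omega

lemma win_succ_right (a len : ℕ) :
    win v hn a (len + 1) = win v hn a len ++ [vv v hn (a + len)] := by
  apply List.ext_getElem
  · simp [win_length]
  intro i h1 h2
  simp only [win, List.getElem_ofFn]
  simp only [List.length_append, win_length, List.length_singleton] at h2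
  by_cases h : i < len
  · rw [List.getElem_append_left (by simpa [win_length] using h)]
    simp only [win, List.getElem_ofFn]
  · have hi : i = len := by omega
    subst hi
    rw [List.getElem_append_right (by simp [win_length])]
    simp [win_length]

lemma win_periodic (a len : ℕ) : win v hn (a + n) len = win v hn a len := by
  rw [win, win]; congr 1; funext i
  rw [show a + n + (i : ℕ) = (a + (i : ℕ)) + n by omega, vv_add_n]

lemma win_zero_n : win v hn 0 n = List.ofFn v := by
  rw [win]; congr 1; funext i
  unfold vv; congr 1; exact Fin.ext (by simp [Nat.mod_eq_of_lt i.isLt])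

variable {G H : Subgroup K}

lemma vv_mem (hv : CyclicallyReduced G H v) (j : ℕ) :
    vv v hn j ∈ G ∨ vv v hn j ∈ H := by
  have := (hv j).1 ⟨0, hn⟩
  simp only [Nat.zero_add] at this
  exact this

lemma cyc_adj (hv : CyclicallyReduced G H v) (hn2 : 2 ≤ n) (j : ℕ) :
    NoF G H (vv v hn j) (vv v hn (j + 1)) := by
  have := (hv j).2.1 0 (by omega)
  simp only [Nat.zero_add] at this
  have e : vv v hn (j + 1) = v ⟨(1 + j) % n, Nat.mod_lt _ hn⟩ := by
    unfold vv; congr 1; exact Fin.ext (by rw [Nat.add_comm])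
  rw [vv, e]
  exact this

lemma vv_notC (hv : CyclicallyReduced G H v) (hn2 : 2 ≤ n) (j : ℕ) :
    vv v hn j ∉ G ⊓ H := by
  intro hmem
  rw [Subgroup.mem_inf] at hmem
  have hadj := cyc_adj v hn hv hn2 j
  rcases vv_mem v hn hv (j + 1) with h | h
  · exact hadj.1 ⟨hmem.1, h⟩
  · exact hadj.2 ⟨hmem.2, h⟩

lemma sr_win (hv : CyclicallyReduced G H v) (hn2 : 2 ≤ n) (a len : ℕ) :
    SR G H (win v hn a len) := by
  constructor
  · intro x hx
    rw [win, List.mem_ofFn] at hx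
    obtain ⟨i, rfl⟩ := hx
    exact ⟨vv_mem v hn hv _, vv_notC v hn hv hn2 _⟩
  · rw [chain'_iff_getElem']
    intro i h
    rw [win_length] at h
    simp only [win, List.getElem_ofFn]
    have := cyc_adj v hn hv hn2 (a + i)
    rw [show a + i + 1 = a + (i + 1) by omega] at this
    exact this

lemma rot_prod_succ (k : ℕ) :
    (win v hn (k + 1) n).prod = (vv v hn k)⁻¹ * (win v hn k n).prod * vv v hn k := by
  have h1 : win v hn k n = vv v hn k :: win v hn (k + 1) (n - 1) := by
    have := win_succ_left v hn k (n - 1)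
    rwa [show n - 1 + 1 = n by omega] at this
  have h2 : win v hn (k + 1) n = win v hn (k + 1) (n - 1) ++ [vv v hn k] := by
    have := win_succ_right v hn (k + 1) (n - 1)
    rw [show n - 1 + 1 = n by omega] at this
    rw [this]
    congr 2
    rw [show k + 1 + (n - 1) = k + n by omega, vv_add_n]
  rw [h1, h2, List.prod_append, List.prod_cons]
  simp [mul_assoc]

end Win

-- main section (inside SRinfra)

lemma nof_of_not_sf {a b : K} (h : ¬((a ∈ G ∧ b ∈ G) ∨ (a ∈ H ∧ b ∈ H))) : NoF G H a b :=
  ⟨fun hh => h (Or.inl hh), fun hh => h (Or.inr hh)⟩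

lemma nof_inv_left {a b : K} (h : NoF G H a b) : NoF G H a⁻¹ b := by
  simpa only [NoF, inv_mem_iff] using h

lemma nof_inv_right {a b : K} (h : NoF G H a b) : NoF G H a b⁻¹ := by
  simpa only [NoF, inv_mem_iff] using h

lemma nof_transfer {p z e : K} (hpz : NoF G H p z)
    (hc : (z ∈ G ∧ e ∈ G) ∨ (z ∈ H ∧ e ∈ H)) (heC : e ∉ G ⊓ H) : NoF G H p e := by
  constructor
  · rintro ⟨h1, h2⟩
    rcases hc with ⟨hz, he⟩ | ⟨hz, he⟩
    · exact hpz.1 ⟨h1, hz⟩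
    · exact heC (Subgroup.mem_inf.2 ⟨h2, he⟩)
  · rintro ⟨h1, h2⟩
    rcases hc with ⟨hz, he⟩ | ⟨hz, he⟩
    · exact heC (Subgroup.mem_inf.2 ⟨he, h2⟩)
    · exact hpz.2 ⟨h1, hz⟩

lemma sr_tail {y : K} {t : List K} (h : SR G H (y :: t)) : SR G H t :=
  ⟨fun z hz => h.1 z (by simp [hz]), (chain'_cons'_iff.1 h.2).2⟩

lemma invrev_length (l : List K) : (invrev l).length = l.length := by simp [invrev]

lemma win_head? {n : ℕ} (v : Fin n → K) (hn : 0 < n) {len : ℕ} (h : 1 ≤ len) (a : ℕ) :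
    (win v hn a len).head? = some (vv v hn a) := by
  have h1 := win_succ_left v hn a (len - 1)
  rw [show len - 1 + 1 = len by omega] at h1
  rw [h1, List.head?_cons]

lemma win_getLast? {n : ℕ} (v : Fin n → K) (hn : 0 < n) {len : ℕ} (h : 1 ≤ len) (a : ℕ) :
    (win v hn a len).getLast? = some (vv v hn (a + (len - 1))) := by
  have h1 := win_succ_right v hn a (len - 1)
  rw [show len - 1 + 1 = len by omega] at h1
  rw [h1, List.getLast?_concat]

/-- The key structural lemma: a "sandwich" list is strictly reduced. -/
lemma sr_sandwich {L₀ W : List K} {α β : K}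
    (hL₀ : SR G H L₀) (hW : SR G H W) (hWne : W ≠ [])
    (hα : (α ∈ G ∨ α ∈ H) ∧ α ∉ G ⊓ H) (hβ : (β ∈ G ∨ β ∈ H) ∧ β ∉ G ⊓ H)
    (hjAα : ∀ p ∈ L₀.getLast?, NoF G H p α)
    (hjαW : ∀ q ∈ W.head?, NoF G H α q)
    (hjWβ : ∀ p ∈ W.getLast?, NoF G H p β)
    (hjβB : ∀ q ∈ L₀.getLast?, NoF G H β q⁻¹) :
    SR G H ((L₀ ++ [α]) ++ W ++ ([β] ++ invrev L₀)) := by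
  have hgl : ((L₀ ++ [α]) ++ W).getLast? = W.getLast? := by
    obtain ⟨y, t, rfl⟩ := List.exists_cons_of_ne_nil hWne
    rw [List.getLast?_append, List.getLast?_eq_getLast (l := y :: t) (by simp)]
    rfl
  refine ⟨?_, ?_⟩
  · intro x hx
    simp only [List.mem_append, List.mem_singleton] at hx
    rcases hx with ((hx | rfl) | hx) | (hx | hx)
    · exact hL₀.1 x hx
    · exact hα
    · exact hW.1 x hx
    · subst hx; exact hβ
    · exact (sr_invrev hL₀).1 x hx
  · rw [chain'_append_iff]
    refine ⟨?_, ?_, ?_⟩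
    · rw [chain'_append_iff]
      refine ⟨?_, hW.2, ?_⟩
      · rw [chain'_append_iff]
        refine ⟨hL₀.2, List.IsChain.singleton _, ?_⟩
        intro p hp q hq
        simp only [List.head?_cons, Option.mem_some_iff] at hq
        subst hq
        exact hjAα p hp
      · intro p hp q hq
        rw [List.getLast?_concat] at hp
        simp only [Option.mem_some_iff] at hp
        subst hp
        exact hjαW q hq
    · rw [chain'_append_iff]
      refine ⟨List.IsChain.singleton _, (sr_invrev hL₀).2, ?_⟩
      intro p hp q hq
      simp only [List.getLast?_singleton, Option.mem_some_iff] at hp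
      subst hp
      rw [invrev_head?] at hq
      obtain ⟨q₀, hq₀, rfl⟩ := Option.map_eq_some_iff.1 hq
      exact hjβB q₀ hq₀
    · intro p hp q hq
      simp only [List.singleton_append, List.head?_cons, Option.mem_some_iff] at hq
      subst hq
      rw [hgl] at hp
      exact hjWβ p hp

/-- Representation of arbitrary elements. -/
def RepP (G H : Subgroup K) (u : K) : Prop :=
  u ∈ G ⊓ H ∨ ∃ L : List K, SR G H L ∧ L ≠ [] ∧ L.prod = u

lemma repP_step {x u : K} (hx : x ∈ G ∨ x ∈ H) (hu : RepP G H u) : RepP G H (x * u) := by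
  rcases hu with huC | ⟨L, hL, hne, rfl⟩
  · by_cases hxu : x * u ∈ G ⊓ H
    · exact Or.inl hxu
    · refine Or.inr ⟨[x * u], ⟨?_, List.IsChain.singleton _⟩, by simp, by simp⟩
      intro z hz
      rw [List.mem_singleton] at hz
      subst hz
      refine ⟨?_, hxu⟩
      rcases hx with h | h
      · exact Or.inl (mul_mem h (Subgroup.mem_inf.1 huC).1)
      · exact Or.inr (mul_mem h (Subgroup.mem_inf.1 huC).2)
  · obtain ⟨y, t, rfl⟩ := List.exists_cons_of_ne_nil hne
    have hy := hL.1 y (by simp)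
    by_cases hxC : x ∈ G ⊓ H
    · exact Or.inr ⟨(x * y) :: t, sr_mergeHead hL hxC, by simp, by simp [mul_assoc]⟩
    by_cases hsf : (x ∈ G ∧ y ∈ G) ∨ (x ∈ H ∧ y ∈ H)
    · have hxyF : x * y ∈ G ∨ x * y ∈ H := by
        rcases hsf with ⟨h1, h2⟩ | ⟨h1, h2⟩
        · exact Or.inl (mul_mem h1 h2)
        · exact Or.inr (mul_mem h1 h2)
      by_cases hzC : x * y ∈ G ⊓ H
      · cases t with
        | nil =>
          left
          simpa [← mul_assoc] using hzC
        | cons y₂ t₂ =>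
          refine Or.inr ⟨(x * y * y₂) :: t₂, ?_, by simp, by simp [mul_assoc]⟩
          exact sr_mergeHead (sr_tail hL) hzC
      · refine Or.inr ⟨(x * y) :: t, ⟨?_, ?_⟩, by simp, by simp [mul_assoc]⟩
        · intro z hz
          rcases List.mem_cons.1 hz with rfl | hz
          · exact ⟨hxyF, hzC⟩
          · exact hL.1 z (by simp [hz])
        · rw [chain'_cons'_iff]
          refine ⟨?_, (chain'_cons'_iff.1 hL.2).2⟩
          intro q hq
          have hyq : NoF G H y q := (chain'_cons'_iff.1 hL.2).1 q hq
          exact nof_symm (nof_transfer (nof_symm hyq)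
            (by rcases hsf with ⟨h1, h2⟩ | ⟨h1, h2⟩
                · exact Or.inl ⟨h2, mul_mem h1 h2⟩
                · exact Or.inr ⟨h2, mul_mem h1 h2⟩) hzC)
    · refine Or.inr ⟨x :: y :: t, ⟨?_, ?_⟩, by simp, by simp⟩
      · intro z hz
        rcases List.mem_cons.1 hz with rfl | hz
        · exact ⟨hx, hxC⟩
        · exact hL.1 z (by simp [hz])
      · rw [chain'_cons_iff]
        exact ⟨nof_of_not_sf hsf, hL.2⟩

lemma repP_list : ∀ L : List K, (∀ x ∈ L, x ∈ G ∨ x ∈ H) → ∀ u, RepP G H u →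
    RepP G H (L.prod * u) := by
  intro L
  induction L with
  | nil => intro _ u hu; simpa using hu
  | cons x t ih =>
    intro hmem u hu
    rw [List.prod_cons, mul_assoc]
    exact repP_step (hmem x (by simp)) (ih (fun z hz => hmem z (by simp [hz])) u hu)

lemma repP_all (hgen : G ⊔ H = ⊤) (u : K) : RepP G H u := by
  have hu : u ∈ Subgroup.closure ((G : Set K) ∪ (H : Set K)) := by
    rw [Subgroup.closure_union, Subgroup.closure_eq, Subgroup.closure_eq, hgen]
    trivial
  refine Subgroup.closure_induction ?_ ?_ ?_ ?_ hu
  · intro x hx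
    rcases hx with hx | hx
    · simpa using repP_step (Or.inl hx) (Or.inl (one_mem _))
    · simpa using repP_step (Or.inr hx) (Or.inl (one_mem _))
  · exact Or.inl (one_mem _)
  · intro x y _ _ px py
    rcases px with hxC | ⟨L, hL, hne, rfl⟩
    · have := repP_list [x] (fun z hz => by
        rw [List.mem_singleton] at hz; subst hz
        exact Or.inl (Subgroup.mem_inf.1 hxC).1) y py
      simpa using this
    · exact repP_list L (fun z hz => (hL.1 z hz).1) y py
  · intro x _ px
    rcases px with hxC | ⟨L, hL, hne, rfl⟩
    · exact Or.inl (inv_mem hxC)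
    · refine Or.inr ⟨invrev L, sr_invrev hL, ?_, invrev_prod L⟩
      simpa [invrev] using hne

/-- Main induction for the conjugacy theorem. -/
lemma conj_main (hB : NormalFormProperty G H) {n : ℕ} (hn2 : 2 ≤ n) (hn : 0 < n)
    (w v : Fin n → K) (hw : CyclicallyReduced G H w) (hv : CyclicallyReduced G H v) :
    ∀ m : ℕ, ∀ u : K,
      ((m = 0 ∧ u ∈ G ⊓ H) ∨ (∃ L, SR G H L ∧ L.length = m ∧ 0 < m ∧ L.prod = u)) →
      ∀ k : ℕ, (List.ofFn w).prod = u * (win v hn k n).prod * u⁻¹ →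
      ∃ k' : ℕ, k' < n ∧ ∃ c : Fin n → K, (∀ i, c i ∈ G ⊓ H) ∧
        (∀ i : Fin n, w i = (c i)⁻¹ * v ⟨((i : ℕ) + k') % n, Nat.mod_lt _ i.pos⟩ *
            c ⟨((i : ℕ) + 1) % n, Nat.mod_lt _ i.pos⟩) ∧
        (∀ i : Fin n, (w i ∈ G ∧ v ⟨((i : ℕ) + k') % n, Nat.mod_lt _ i.pos⟩ ∈ G) ∨
            (w i ∈ H ∧ v ⟨((i : ℕ) + k') % n, Nat.mod_lt _ i.pos⟩ ∈ H)) := by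
  have hsrw : SR G H (List.ofFn w) := by
    rw [← win_zero_n w hn]; exact sr_win w hn hw hn2 0 n
  have hmod : ∀ (i : Fin n) (k : ℕ), ((i : ℕ) + k % n) % n = ((i : ℕ) + k) % n := by
    intro i k
    conv_lhs => rw [Nat.add_mod]
    conv_rhs => rw [Nat.add_mod]
    rw [Nat.mod_mod_of_dvd k (dvd_refl n)]
  have hwget : ∀ i : Fin n, (List.ofFn w).getD (i : ℕ) 1 = w i := by
    intro i
    rw [List.getD_eq_getElem _ _ (by simp [i.isLt]), List.getElem_ofFn]
  intro m
  induction m using Nat.strong_induction_on with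
  | _ m ih =>
  intro u hu k heq
  rcases hu with ⟨rfl, hd⟩ | ⟨L, hL, hm, hmpos, hprodL⟩
  · -- base case : u ∈ C
    have hdG : u ∈ G := (Subgroup.mem_inf.1 hd).1
    have hdH : u ∈ H := (Subgroup.mem_inf.1 hd).2
    have h1 : win v hn k n = vv v hn k :: win v hn (k + 1) (n - 1) := by
      have := win_succ_left v hn k (n - 1)
      rwa [show n - 1 + 1 = n by omega] at this
    have h2 : win v hn (k + 1) (n - 1)
        = win v hn (k + 1) (n - 2) ++ [vv v hn (k + (n - 1))] := by
      have := win_succ_right v hn (k + 1) (n - 2)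
      rw [show n - 2 + 1 = n - 1 by omega] at this
      rw [this, show k + 1 + (n - 2) = k + (n - 1) by omega]
    set b := (u * vv v hn k) :: (win v hn (k + 1) (n - 2) ++ [vv v hn (k + (n - 1)) * u⁻¹])
      with hbdef
    have hsrb : SR G H b := by
      have s0 := sr_win v hn hv hn2 k n
      rw [h1, h2] at s0
      have s1 := sr_mergeHead s0 hd
      rw [← List.cons_append] at s1
      have s2 := sr_mergeLast s1 (inv_mem hd)
      rw [List.cons_append] at s2
      exact s2
    have hab : (List.ofFn w).prod = b.prod * 1 := by
      rw [mul_one, hbdef, heq, h1, h2]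
      simp only [List.prod_cons, List.prod_append, List.prod_singleton, List.prod_nil]
      group
    obtain ⟨hlen, c, hc0, hcn, hcmem, hrel⟩ :=
      sr_unique hB (List.ofFn w) b hsrw hsrb 1 (one_mem _) hab
    simp only [List.length_ofFn] at hcn hrel
    have hbget0 : b.getD 0 1 = u * vv v hn k := List.getD_cons_zero
    have hbgetmid : ∀ j, j < n - 2 → b.getD (j + 1) 1 = vv v hn (k + (j + 1)) := by
      intro j hj
      rw [hbdef, List.getD_cons_succ, List.getD_append _ _ _ _ (by rw [win_length]; omega),
        win_getD _ _ _ _ _ hj, show k + 1 + j = k + (j + 1) by omega]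
    have hbgetlast : b.getD (n - 1) 1 = vv v hn (k + (n - 1)) * u⁻¹ := by
      rw [hbdef, show n - 1 = (n - 2) + 1 by omega, List.getD_cons_succ,
        List.getD_append_right _ _ _ _ (by rw [win_length]), win_length, Nat.sub_self]
      rfl
    refine ⟨k % n, Nat.mod_lt _ hn, fun i => if (i : ℕ) = 0 then u⁻¹ else c i, ?_, ?_, ?_⟩
    · intro i
      beta_reduce
      split_ifs
      · exact inv_mem hd
      · exact hcmem i
    · intro i
      beta_reduce
      have hvvi : v ⟨((i : ℕ) + k % n) % n, Nat.mod_lt _ i.pos⟩ = vv v hn ((i : ℕ) + k) := by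
        unfold vv; congr 1; exact Fin.ext (hmod i k)
      rw [hvvi]
      have he := (hrel (i : ℕ) i.isLt).1
      rw [hwget i] at he
      by_cases h0 : (i : ℕ) = 0
      · have hival : ((i : ℕ) + 1) % n = 1 := by
          rw [h0]; exact Nat.mod_eq_of_lt (by omega)
        rw [if_pos h0]
        rw [show ((⟨((i : ℕ) + 1) % n, Nat.mod_lt _ i.pos⟩ : Fin n) : ℕ) = ((i : ℕ) + 1) % n
          from rfl]
        rw [hival, if_neg (by omega)]
        rw [h0] at he ⊢
        rw [hbget0, hc0] at he
        rw [show (0 : ℕ) + 1 = 1 from rfl] at he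
        rw [he]
        simp only [Nat.zero_add]
        group
      · rw [if_neg h0]
        by_cases hlast : (i : ℕ) = n - 1
        · have hival : ((i : ℕ) + 1) % n = 0 := by
            rw [hlast, show n - 1 + 1 = n by omega, Nat.mod_self]
          rw [show ((⟨((i : ℕ) + 1) % n, Nat.mod_lt _ i.pos⟩ : Fin n) : ℕ) = ((i : ℕ) + 1) % n
            from rfl]
          rw [hival, if_pos rfl]
          rw [hlast] at he ⊢
          rw [hbgetlast, show n - 1 + 1 = n by omega, hcn, mul_one] at he
          rw [he, show k + (n - 1) = (n - 1) + k by omega]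
          group
        · have hival : ((i : ℕ) + 1) % n = (i : ℕ) + 1 :=
            Nat.mod_eq_of_lt (by have := i.isLt; omega)
          rw [show ((⟨((i : ℕ) + 1) % n, Nat.mod_lt _ i.pos⟩ : Fin n) : ℕ) = ((i : ℕ) + 1) % n
            from rfl]
          rw [hival, if_neg (by omega)]
          obtain ⟨j, hj⟩ : ∃ j, (i : ℕ) = j + 1 := ⟨(i : ℕ) - 1, by omega⟩
          have hjlt : j < n - 2 := by have := i.isLt; omega
          rw [hj] at he ⊢
          rw [hbgetmid j hjlt] at he
          rw [he, show k + (j + 1) = j + 1 + k by omega]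
    · intro i
      have hvvi : v ⟨((i : ℕ) + k % n) % n, Nat.mod_lt _ i.pos⟩ = vv v hn ((i : ℕ) + k) := by
        unfold vv; congr 1; exact Fin.ext (hmod i k)
      rw [hvvi]
      have hfa := (hrel (i : ℕ) i.isLt).2
      rw [hwget i] at hfa
      by_cases h0 : (i : ℕ) = 0
      · rw [h0] at hfa ⊢
        rw [hbget0] at hfa
        simp only [Nat.zero_add]
        rcases hfa with ⟨h1, h2⟩ | ⟨h1, h2⟩
        · exact Or.inl ⟨h1, (mul_mem_cancel_left hdG).1 h2⟩
        · exact Or.inr ⟨h1, (mul_mem_cancel_left hdH).1 h2⟩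
      · by_cases hlast : (i : ℕ) = n - 1
        · rw [hlast] at hfa ⊢
          rw [hbgetlast] at hfa
          rw [show (n - 1) + k = k + (n - 1) by omega]
          rcases hfa with ⟨h1, h2⟩ | ⟨h1, h2⟩
          · exact Or.inl ⟨h1, (mul_mem_cancel_right (inv_mem hdG)).1 h2⟩
          · exact Or.inr ⟨h1, (mul_mem_cancel_right (inv_mem hdH)).1 h2⟩
        · obtain ⟨j, hj⟩ : ∃ j, (i : ℕ) = j + 1 := ⟨(i : ℕ) - 1, by omega⟩
          have hjlt : j < n - 2 := by have := i.isLt; omega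
          rw [hj] at hfa ⊢
          rw [hbgetmid j hjlt] at hfa
          rw [show j + 1 + k = k + (j + 1) by omega]
          exact hfa
  · -- step case
    obtain ⟨L₀, z, hcat0⟩ := (L.eq_nil_or_concat).resolve_left
      (by intro h; rw [h] at hm; simp at hm; omega)
    rw [List.concat_eq_append] at hcat0
    subst hcat0
    subst hprodL
    have hupr : (L₀ ++ [z]).prod = L₀.prod * z := by simp
    have hz := hL.1 z (by simp)
    have hL₀ : SR G H L₀ := ⟨fun p hp => hL.1 p (by simp [hp]), (chain'_append_iff.1 hL.2).1⟩
    have hNz : ∀ p ∈ L₀.getLast?, NoF G H p z := by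
      intro p hp
      exact (chain'_append_iff.1 hL.2).2.2 p hp z (by simp)
    have hadjx : NoF G H (vv v hn (k + (n - 1))) (vv v hn k) := by
      have := cyc_adj v hn hv hn2 (k + (n - 1))
      rwa [show k + (n - 1) + 1 = k + n by omega, vv_add_n] at this
    have hx0C := vv_notC v hn hv hn2 k
    have hx1C := vv_notC v hn hv hn2 (k + (n - 1))
    have h1 : win v hn k n = vv v hn k :: win v hn (k + 1) (n - 1) := by
      have := win_succ_left v hn k (n - 1)
      rwa [show n - 1 + 1 = n by omega] at this
    have h2 : win v hn k n = win v hn k (n - 1) ++ [vv v hn (k + (n - 1))] := by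
      have := win_succ_right v hn k (n - 1)
      rwa [show n - 1 + 1 = n by omega] at this
    have hmlen : m = L₀.length + 1 := by
      rw [← hm]; simp
    by_cases hsf0 : (z ∈ G ∧ vv v hn k ∈ G) ∨ (z ∈ H ∧ vv v hn k ∈ H)
    · by_cases heC : z * vv v hn k ∈ G ⊓ H
      · -- absorb and recurse with k+1
        have hQ := rot_prod_succ v hn k
        have heq' : (List.ofFn w).prod = (L₀.prod * (z * vv v hn k)) *
            (win v hn (k + 1) n).prod * (L₀.prod * (z * vv v hn k))⁻¹ := by
          rw [hQ, heq, hupr]; group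
        rcases L₀.eq_nil_or_concat with hnil | ⟨L₁, t, hcat⟩
        · refine ih 0 (by omega) _ (Or.inl ⟨rfl, ?_⟩) (k + 1) heq'
          rw [hnil]
          simpa using heC
        · rw [List.concat_eq_append] at hcat
          refine ih (m - 1) (by omega) (L₀.prod * (z * vv v hn k))
            (Or.inr ⟨L₁ ++ [t * (z * vv v hn k)], ?_, ?_, ?_, ?_⟩) (k + 1) heq'
          · exact sr_mergeLast (hcat ▸ hL₀) heC
          · rw [hcat] at hmlen; simp at hmlen ⊢; omega
          · rw [hcat] at hmlen; simp at hmlen; omega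
          · rw [hcat]; simp [List.prod_append, mul_assoc]
      · -- contradiction via a strictly reduced expression of the wrong length
        exfalso
        have heF : (z ∈ G ∧ z * vv v hn k ∈ G) ∨ (z ∈ H ∧ z * vv v hn k ∈ H) := by
          rcases hsf0 with ⟨ha, hb⟩ | ⟨ha, hb⟩
          · exact Or.inl ⟨ha, mul_mem ha hb⟩
          · exact Or.inr ⟨ha, mul_mem ha hb⟩
        have heF0 : (vv v hn k ∈ G ∧ z * vv v hn k ∈ G) ∨
            (vv v hn k ∈ H ∧ z * vv v hn k ∈ H) := by
          rcases hsf0 with ⟨ha, hb⟩ | ⟨ha, hb⟩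
          · exact Or.inl ⟨hb, mul_mem ha hb⟩
          · exact Or.inr ⟨hb, mul_mem ha hb⟩
        have hswap : (vv v hn k ∈ G ∧ z ∈ G) ∨ (vv v hn k ∈ H ∧ z ∈ H) := by
          rcases hsf0 with ⟨ha, hb⟩ | ⟨ha, hb⟩
          · exact Or.inl ⟨hb, ha⟩
          · exact Or.inr ⟨hb, ha⟩
        have hXsr : SR G H ((L₀ ++ [z * vv v hn k]) ++ win v hn (k + 1) (n - 1) ++
            ([z⁻¹] ++ invrev L₀)) := by
          refine sr_sandwich hL₀ (sr_win v hn hv hn2 (k + 1) (n - 1))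
            (List.ne_nil_of_length_pos (by rw [win_length]; omega))
            ⟨?_, heC⟩ ⟨?_, by simpa only [inv_mem_iff] using hz.2⟩ ?_ ?_ ?_ ?_
          · rcases heF with ⟨_, hb⟩ | ⟨_, hb⟩
            · exact Or.inl hb
            · exact Or.inr hb
          · rcases hz.1 with hb | hb
            · exact Or.inl (inv_mem hb)
            · exact Or.inr (inv_mem hb)
          · exact fun p hp => nof_transfer (hNz p hp) heF heC
          · intro q hq
            rw [win_head? v hn (by omega) (k + 1)] at hq
            simp only [Option.mem_some_iff] at hq
            subst hq
            exact nof_symm (nof_transfer (nof_symm (cyc_adj v hn hv hn2 k)) heF0 heC)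
          · intro p hp
            rw [win_getLast? v hn (by omega) (k + 1),
              show k + 1 + (n - 1 - 1) = k + (n - 1) by omega] at hp
            simp only [Option.mem_some_iff] at hp
            subst hp
            exact nof_inv_right (nof_transfer hadjx hswap hz.2)
          · exact fun q hq => nof_inv_inv (hNz q hq)
        have hXprod : ((L₀ ++ [z * vv v hn k]) ++ win v hn (k + 1) (n - 1) ++
            ([z⁻¹] ++ invrev L₀)).prod = (List.ofFn w).prod := by
          rw [heq, hupr, h1]
          simp only [List.prod_append, List.prod_cons, List.prod_singleton,
            List.prod_nil, invrev_prod]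
          group
        obtain ⟨hlen2, -⟩ := sr_unique hB (List.ofFn w) _ hsrw hXsr 1 (one_mem _)
          (by rw [mul_one, hXprod])
        rw [List.length_ofFn] at hlen2
        simp only [List.length_append, List.length_singleton, win_length,
          invrev_length] at hlen2
        omega
    · by_cases hsf1 : (z ∈ G ∧ vv v hn (k + (n - 1)) ∈ G) ∨
          (z ∈ H ∧ vv v hn (k + (n - 1)) ∈ H)
      · by_cases heC : vv v hn (k + (n - 1)) * z⁻¹ ∈ G ⊓ H
        · -- absorb and recurse with k + (n-1)
          have hQ := rot_prod_succ v hn (k + (n - 1))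
          rw [show k + (n - 1) + 1 = k + n by omega, win_periodic] at hQ
          have heq' : (List.ofFn w).prod = (L₀.prod * (vv v hn (k + (n - 1)) * z⁻¹)⁻¹) *
              (win v hn (k + (n - 1)) n).prod *
              (L₀.prod * (vv v hn (k + (n - 1)) * z⁻¹)⁻¹)⁻¹ := by
            rw [heq, hupr, hQ]; group
          rcases L₀.eq_nil_or_concat with hnil | ⟨L₁, t, hcat⟩
          · refine ih 0 (by omega) _ (Or.inl ⟨rfl, ?_⟩) (k + (n - 1)) heq'
            rw [hnil]
            simpa using inv_mem heC
          · rw [List.concat_eq_append] at hcat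
            refine ih (m - 1) (by omega) (L₀.prod * (vv v hn (k + (n - 1)) * z⁻¹)⁻¹)
              (Or.inr ⟨L₁ ++ [t * (vv v hn (k + (n - 1)) * z⁻¹)⁻¹], ?_, ?_, ?_, ?_⟩)
              (k + (n - 1)) heq'
            · exact sr_mergeLast (hcat ▸ hL₀) (inv_mem heC)
            · rw [hcat] at hmlen; simp at hmlen ⊢; omega
            · rw [hcat] at hmlen; simp at hmlen; omega
            · rw [hcat]; simp [List.prod_append, mul_assoc]
        · -- contradiction
          exfalso
          have heF : (z ∈ G ∧ vv v hn (k + (n - 1)) * z⁻¹ ∈ G) ∨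
              (z ∈ H ∧ vv v hn (k + (n - 1)) * z⁻¹ ∈ H) := by
            rcases hsf1 with ⟨ha, hb⟩ | ⟨ha, hb⟩
            · exact Or.inl ⟨ha, mul_mem hb (inv_mem ha)⟩
            · exact Or.inr ⟨ha, mul_mem hb (inv_mem ha)⟩
          have heF1 : (vv v hn (k + (n - 1)) ∈ G ∧ vv v hn (k + (n - 1)) * z⁻¹ ∈ G) ∨
              (vv v hn (k + (n - 1)) ∈ H ∧ vv v hn (k + (n - 1)) * z⁻¹ ∈ H) := by
            rcases hsf1 with ⟨ha, hb⟩ | ⟨ha, hb⟩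
            · exact Or.inl ⟨hb, mul_mem hb (inv_mem ha)⟩
            · exact Or.inr ⟨hb, mul_mem hb (inv_mem ha)⟩
          have hXsr : SR G H ((L₀ ++ [z]) ++ win v hn k (n - 1) ++
              ([vv v hn (k + (n - 1)) * z⁻¹] ++ invrev L₀)) := by
            refine sr_sandwich hL₀ (sr_win v hn hv hn2 k (n - 1))
              (List.ne_nil_of_length_pos (by rw [win_length]; omega))
              hz ⟨?_, heC⟩ hNz ?_ ?_ ?_
            · rcases heF with ⟨_, hb⟩ | ⟨_, hb⟩
              · exact Or.inl hb
              · exact Or.inr hb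
            · intro q hq
              rw [win_head? v hn (by omega) k] at hq
              simp only [Option.mem_some_iff] at hq
              subst hq
              exact nof_of_not_sf hsf0
            · intro p hp
              rw [win_getLast? v hn (by omega) k] at hp
              simp only [Option.mem_some_iff] at hp
              subst hp
              have hc := cyc_adj v hn hv hn2 (k + (n - 1 - 1))
              rw [show k + (n - 1 - 1) + 1 = k + (n - 1) by omega] at hc
              exact nof_transfer hc heF1 heC
            · intro q hq
              exact nof_symm (nof_transfer (nof_inv_left (hNz q hq)) heF heC)
          have hXprod : ((L₀ ++ [z]) ++ win v hn k (n - 1) ++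
              ([vv v hn (k + (n - 1)) * z⁻¹] ++ invrev L₀)).prod = (List.ofFn w).prod := by
            rw [heq, hupr, h2]
            simp only [List.prod_append, List.prod_cons, List.prod_singleton,
              List.prod_nil, invrev_prod]
            group
          obtain ⟨hlen2, -⟩ := sr_unique hB (List.ofFn w) _ hsrw hXsr 1 (one_mem _)
            (by rw [mul_one, hXprod])
          rw [List.length_ofFn] at hlen2
          simp only [List.length_append, List.length_singleton, win_length,
            invrev_length] at hlen2
          omega
      · -- z shares no factor with either end: contradiction
        exfalso
        have hXsr : SR G H ((L₀ ++ [z]) ++ win v hn k n ++ ([z⁻¹] ++ invrev L₀)) := by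
          refine sr_sandwich hL₀ (sr_win v hn hv hn2 k n)
            (List.ne_nil_of_length_pos (by rw [win_length]; omega))
            hz ⟨?_, by simpa only [inv_mem_iff] using hz.2⟩ hNz ?_ ?_ ?_
          · rcases hz.1 with hb | hb
            · exact Or.inl (inv_mem hb)
            · exact Or.inr (inv_mem hb)
          · intro q hq
            rw [win_head? v hn (by omega) k] at hq
            simp only [Option.mem_some_iff] at hq
            subst hq
            exact nof_of_not_sf hsf0
          · intro p hp
            rw [win_getLast? v hn (by omega) k] at hp
            simp only [Option.mem_some_iff] at hp
            subst hp
            exact nof_inv_right (nof_symm (nof_of_not_sf hsf1))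
          · exact fun q hq => nof_inv_inv (hNz q hq)
        have hXprod : ((L₀ ++ [z]) ++ win v hn k n ++ ([z⁻¹] ++ invrev L₀)).prod
            = (List.ofFn w).prod := by
          rw [heq, hupr]
          simp only [List.prod_append, List.prod_cons, List.prod_singleton,
            List.prod_nil, invrev_prod]
          group
        obtain ⟨hlen2, -⟩ := sr_unique hB (List.ofFn w) _ hsrw hXsr 1 (one_mem _)
          (by rw [mul_one, hXprod])
        rw [List.length_ofFn] at hlen2
        simp only [List.length_append, List.length_singleton, win_length,
          invrev_length] at hlen2
        omega

end SRinfra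

/-- If two cyclically reduced sequences of length `n ≥ 2` in an
amalgamated free product `G *_C H` have conjugate products, then one is obtained from a
cyclic rotation of the other by conjugating termwise by elements of `C`:
there are `k` and `c i ∈ C` with `w i = (c i)⁻¹ * v (i + k) * c (i + 1)` (indices mod
`n`); in particular `w i` and `v (i + k)` lie in the same factor. -/
theorem statement1 (G H C : Subgroup K) (hCG : C ≤ G) (hCH : C ≤ H) (hC : C = G ⊓ H)
    (hgen : G ⊔ H = ⊤) (britton : NormalFormProperty G H)
    {n : ℕ} (hn : 2 ≤ n) (w v : Fin n → K)
    (hw : CyclicallyReduced G H w) (hv : CyclicallyReduced G H v)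
    (hconj : IsConj (seqProd w) (seqProd v)) :
    ∃ k : ℕ, k < n ∧ ∃ c : Fin n → K, (∀ i, c i ∈ C) ∧
      (∀ i : Fin n,
        w i = (c i)⁻¹ * v ⟨((i : ℕ) + k) % n, Nat.mod_lt _ i.pos⟩ *
          c ⟨((i : ℕ) + 1) % n, Nat.mod_lt _ i.pos⟩) ∧
      (∀ i : Fin n,
        (w i ∈ G ∧ v ⟨((i : ℕ) + k) % n, Nat.mod_lt _ i.pos⟩ ∈ G) ∨
        (w i ∈ H ∧ v ⟨((i : ℕ) + k) % n, Nat.mod_lt _ i.pos⟩ ∈ H)) := by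
  subst hC
  have hn0 : 0 < n := by omega
  rw [isConj_iff] at hconj
  obtain ⟨g, hg⟩ := hconj
  have heq : (List.ofFn w).prod = g⁻¹ * (win v hn0 0 n).prod * g⁻¹⁻¹ := by
    rw [win_zero_n]
    rw [seqProd, seqProd] at hg
    rw [← hg]
    group
  rcases repP_all hgen g⁻¹ with hCc | ⟨L, hL, hne, hprod⟩
  · exact conj_main britton hn hn0 w v hw hv 0 g⁻¹ (Or.inl ⟨rfl, hCc⟩) 0 heq
  · exact conj_main britton hn hn0 w v hw hv L.length g⁻¹
      (Or.inr ⟨L, hL, rfl, List.length_pos_iff.2 hne, hprod⟩) 0 heq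

end AmalgamStmt
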